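/- In the SCP dynamic-programming setting, suppose index j+1 exists and blk(j+1) = blk(j) + 1 (i.e., S_{j+1} is the first set of its block and a previous block exists). Then for every W ⊆ α: OPT(W, j+1, 2) = 2 + OPT(W \ S_{j+1}, j, flag(blk(j))), where arithmetic is in ℕ ∪ {∞} with 2 + ∞ = ∞. -/

import Mathlib

/-- `OPT S blk flag W j b` in the SCP dynamic-programming setting: the infimum, over all
index sets `X ⊆ {i : i ≤ j}` covering `W` and meeting every block `β_x` (`x ≤ blk j`)
whose (updated) flag is `2`, of `2|X|` plus the number of blocks `β_x` (`x ≤ blk j`)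
with (updated) flag `1` that `X` misses; here the flag of block `blk j` is overridden
to be `b`.  The value is `∞` if no such `X` exists. -/
noncomputable def OPT {α : Type*} [DecidableEq α] {m q : ℕ}
    (S : Fin m → Finset α) (blk : Fin m → Fin q) (flag : Fin q → ℕ)
    (W : Finset α) (j : Fin m) (b : ℕ) : ℕ∞ :=
  sInf { n : ℕ∞ | ∃ X : Finset (Fin m),
    (∀ i ∈ X, i ≤ j) ∧
    (W ⊆ X.biUnion S) ∧
    (∀ x : Fin q, x ≤ blk j → Function.update flag (blk j) b x = 2 →
      ∃ i ∈ X, blk i = x) ∧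
    n = 2 * (X.card : ℕ∞) +
      ((Finset.univ.filter (fun x : Fin q =>
        x ≤ blk j ∧ Function.update flag (blk j) b x = 1 ∧
          ∀ i ∈ X, blk i ≠ x)).card : ℕ∞) }

private lemma sInf_eq_two_add {A B : Set ℕ∞}
    (h1 : ∀ n ∈ B, 2 + n ∈ A) (h2 : ∀ n ∈ A, ∃ n' ∈ B, n = 2 + n') :
    sInf A = 2 + sInf B := by
  apply le_antisymm
  · rcases eq_or_ne (sInf B) ⊤ with h | h
    · rw [h]
      simp
    · have hBne : B.Nonempty := by
        by_contra hb
        rw [Set.not_nonempty_iff_eq_empty] at hb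
        rw [hb, sInf_empty] at h
        exact h rfl
      exact sInf_le (h1 _ (csInf_mem hBne))
  · refine le_sInf fun n hn => ?_
    obtain ⟨n', hn', rfl⟩ := h2 n hn
    exact add_le_add_right (sInf_le hn') 2

/-- SCP recurrence when `S_{j+1}` is the first set of its block and a
previous block exists, for flag `b = 2`:
`OPT(W, j+1, 2) = 2 + OPT(W \\ S_{j+1}, j, flag(blk j))`. -/
theorem scp_recurrence_new_block_flag_two
    {α : Type*} [DecidableEq α] {m q : ℕ} (hm : 0 < m) (hq : 0 < q)
    (S : Fin m → Finset α) (blk : Fin m → Fin q)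
    (hmono : Monotone blk) (hsurj : Function.Surjective blk)
    (flag : Fin q → ℕ) (hflag : ∀ x, flag x ≤ 2)
    (j j' : Fin m) (hj' : (j' : ℕ) = (j : ℕ) + 1)
    (hblk : (blk j' : ℕ) = (blk j : ℕ) + 1)
    (W : Finset α) :
    OPT S blk flag W j' 2 = 2 + OPT S blk flag (W \ S j') j (flag (blk j)) := by
  classical
  have hjlt : j < j' := by rw [Fin.lt_def, hj']; omega
  have hblt : blk j < blk j' := by rw [Fin.lt_def, hblk]; omega
  have hib : ∀ i : Fin m, i ≤ j → blk i ≠ blk j' := fun i hi =>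
    ne_of_lt (lt_of_le_of_lt (hmono hi) hblt)
  have hle' : ∀ i : Fin m, i ≤ j' ↔ (i ≤ j ∨ i = j') := by
    intro i
    rw [Fin.le_def, Fin.le_def, hj', Fin.ext_iff]
    omega
  have hxle : ∀ x : Fin q, x ≤ blk j' ↔ (x ≤ blk j ∨ x = blk j') := by
    intro x
    rw [Fin.le_def, Fin.le_def, hblk, Fin.ext_iff]
    omega
  have hxne : ∀ x : Fin q, x ≤ blk j → x ≠ blk j' := fun x hx =>
    ne_of_lt (lt_of_le_of_lt hx hblt)
  have hfil : ∀ X' : Finset (Fin m),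
      Finset.univ.filter (fun x : Fin q => x ≤ blk j' ∧
        Function.update flag (blk j') 2 x = 1 ∧ ∀ i ∈ insert j' X', blk i ≠ x)
      = Finset.univ.filter (fun x : Fin q => x ≤ blk j ∧ flag x = 1 ∧
        ∀ i ∈ X', blk i ≠ x) := by
    intro X'
    ext x
    simp only [Finset.mem_filter, Finset.mem_univ, true_and, Finset.mem_insert]
    constructor
    · rintro ⟨hx, h1, hmiss⟩
      rcases (hxle x).mp hx with hxb | rfl
      · rw [Function.update_of_ne (hxne x hxb)] at h1
        exact ⟨hxb, h1, fun i hi => hmiss i (Or.inr hi)⟩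
      · rw [Function.update_self] at h1
        exact absurd h1 (by norm_num)
    · rintro ⟨hxb, h1, hmiss⟩
      refine ⟨(hxle x).mpr (Or.inl hxb), ?_, ?_⟩
      · rw [Function.update_of_ne (hxne x hxb)]
        exact h1
      · rintro i (rfl | hi)
        · exact Ne.symm (hxne x hxb)
        · exact hmiss i hi
  unfold OPT
  simp only [Function.update_eq_self]
  apply sInf_eq_two_add
  · -- backward: from a feasible X' for the RHS build `insert j' X'`
    rintro n ⟨X', hX1, hX2, hX3, rfl⟩
    have hj'X : j' ∉ X' := fun h => absurd hjlt (not_lt.mpr (hX1 j' h))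
    refine ⟨insert j' X', ?_, ?_, ?_, ?_⟩
    · intro i hi
      rcases Finset.mem_insert.mp hi with rfl | hi'
      · exact le_rfl
      · exact (hle' i).mpr (Or.inl (hX1 i hi'))
    · intro w hw
      by_cases hwS : w ∈ S j'
      · exact Finset.mem_biUnion.mpr ⟨j', Finset.mem_insert_self _ _, hwS⟩
      · obtain ⟨i, hi, hwi⟩ := Finset.mem_biUnion.mp (hX2 (Finset.mem_sdiff.mpr ⟨hw, hwS⟩))
        exact Finset.mem_biUnion.mpr ⟨i, Finset.mem_insert_of_mem hi, hwi⟩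
    · intro x hx h2x
      rcases (hxle x).mp hx with hxb | rfl
      · rw [Function.update_of_ne (hxne x hxb)] at h2x
        obtain ⟨i, hi, hbi⟩ := hX3 x hxb h2x
        exact ⟨i, Finset.mem_insert_of_mem hi, hbi⟩
      · exact ⟨j', Finset.mem_insert_self _ _, rfl⟩
    · rw [hfil X', Finset.card_insert_of_notMem hj'X]
      push_cast
      ring
  · -- forward: a feasible X for the LHS must contain j'
    rintro n ⟨X, hX1, hX2, hX3, rfl⟩
    have hj'X : j' ∈ X := by
      obtain ⟨i, hi, hbi⟩ := hX3 (blk j') le_rfl (Function.update_self _ _ _)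
      rcases (hle' i).mp (hX1 i hi) with h | rfl
      · exact absurd hbi (hib i h)
      · exact hi
    set X' := X.erase j' with hX'
    have hXeq : insert j' X' = X := Finset.insert_erase hj'X
    refine ⟨2 * (X'.card : ℕ∞) + ((Finset.univ.filter (fun x : Fin q =>
        x ≤ blk j ∧ flag x = 1 ∧ ∀ i ∈ X', blk i ≠ x)).card : ℕ∞),
      ⟨X', ?_, ?_, ?_, rfl⟩, ?_⟩
    · intro i hi
      have hij' : i ≤ j' := hX1 i (Finset.mem_of_mem_erase hi)
      rcases (hle' i).mp hij' with h | rfl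
      · exact h
      · exact absurd rfl (Finset.ne_of_mem_erase hi)
    · intro w hw
      obtain ⟨hwW, hwS⟩ := Finset.mem_sdiff.mp hw
      obtain ⟨i, hi, hwi⟩ := Finset.mem_biUnion.mp (hX2 hwW)
      have : i ≠ j' := fun h => hwS (h ▸ hwi)
      exact Finset.mem_biUnion.mpr ⟨i, Finset.mem_erase.mpr ⟨this, hi⟩, hwi⟩
    · intro x hx h2x
      obtain ⟨i, hi, hbi⟩ := hX3 x ((hxle x).mpr (Or.inl hx))
        (by rw [Function.update_of_ne (hxne x hx)]; exact h2x)
      have : i ≠ j' := by rintro rfl; exact (hxne x hx) hbi.symm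
      exact ⟨i, Finset.mem_erase.mpr ⟨this, hi⟩, hbi⟩
    · rw [← hXeq, hfil X', Finset.card_insert_of_notMem (Finset.notMem_erase _ _)]
      push_cast
      ring
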